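/- arXiv:0811.4669 — 5 statements merged into one kernel-verified Lean document; each statement's English description precedes it below -/
import Mathlib

section
/- In the Lie algebra so(n,1) ⊗ Q, the elements Q_i = (E_{i,n+1} + E_{n+1,i}) ⊗ λ̄i satisfy [Q_i,[Q_j,Q_k]] = 0 whenever i, j, k are pairwise distinct. -/
open MvPolynomial Matrix

noncomputable section

/-- The ideal generated by the polynomials `λᵢ² − λⱼ² + rᵢ − rⱼ`. -/
def LLIdeal (n : ℕ) (r : Fin n → ℂ) : Ideal (MvPolynomial (Fin n) ℂ) :=
  Ideal.span {p | ∃ i j : Fin n, p = X i ^ 2 - X j ^ 2 + C (r i) - C (r j)}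

/-- The algebra `Q` of polynomial functions on the curve. -/
abbrev LLQ (n : ℕ) (r : Fin n → ℂ) : Type := MvPolynomial (Fin n) ℂ ⧸ LLIdeal n r

/-- `λ̄ᵢ`, the image of `λᵢ` in `Q`. -/
def lamQ (n : ℕ) (r : Fin n → ℂ) (i : Fin n) : LLQ n r :=
  Ideal.Quotient.mk _ (X i)

/-- `λ̄ = λ̄ᵢ² + rᵢ` (independent of `i`). -/
def lambar (n : ℕ) (r : Fin n → ℂ) [NeZero n] : LLQ n r :=
  lamQ n r 0 ^ 2 + algebraMap ℂ _ (r 0)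

/-- Matrices of size `n+1` over `Q`; contains `so(n,1) ⊗ Q` with its commutator
Lie bracket. -/
abbrev LLM (n : ℕ) (r : Fin n → ℂ) : Type := Matrix (Fin (n+1)) (Fin (n+1)) (LLQ n r)

/-- `Q_i = (E_{i,n+1} + E_{n+1,i}) ⊗ λ̄ᵢ`. -/
def Qgen (n : ℕ) (r : Fin n → ℂ) (i : Fin n) : LLM n r :=
  lamQ n r i • (single i.castSucc (Fin.last n) 1 + single (Fin.last n) i.castSucc 1)

/-- `Q^{2k-1}_l = (E_{l,n+1} + E_{n+1,l}) ⊗ λ̄^{k-1} λ̄_l`. -/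
def Qodd (n : ℕ) (r : Fin n → ℂ) [NeZero n] (k : ℕ) (l : Fin n) : LLM n r :=
  (lambar n r ^ (k-1) * lamQ n r l) •
    (single l.castSucc (Fin.last n) 1 + single (Fin.last n) l.castSucc 1)

/-- `Q^{2k}_{ij} = (E_{i,j} − E_{j,i}) ⊗ λ̄^{k-1} λ̄ᵢ λ̄ⱼ`. -/
def Qeven (n : ℕ) (r : Fin n → ℂ) [NeZero n] (k : ℕ) (i j : Fin n) : LLM n r :=
  (lambar n r ^ (k-1) * lamQ n r i * lamQ n r j) •
    (single i.castSucc j.castSucc 1 - single j.castSucc i.castSucc 1)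

end


lemma aux_bracket {R : Type*} [CommRing R] {N : ℕ} (a b c : R) (x y z l : Fin N)
    (hxy : x ≠ y) (hxz : x ≠ z) (hyz : y ≠ z) (hxl : x ≠ l) (hyl : y ≠ l) (hzl : z ≠ l) :
    ⁅a • (single x l (1:R) + single l x 1),
      ⁅b • (single y l (1:R) + single l y 1),
        c • (single z l (1:R) + single l z 1)⁆⁆ = (0 : Matrix (Fin N) (Fin N) R) := by
  simp only [Ring.lie_def, Matrix.smul_mul, Matrix.mul_smul, Matrix.add_mul, Matrix.mul_add,
    smul_add, smul_sub, smul_smul, Matrix.sub_mul, Matrix.mul_sub]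
  simp only [Matrix.single_mul_single_of_ne, Matrix.single_mul_single_same, hxy, hxz, hyz, hxy.symm,
    hxz.symm, hyz.symm, hxl, hyl, hzl, hxl.symm, hyl.symm, hzl.symm, ne_eq, not_false_iff,
    one_mul, smul_zero, add_zero, zero_add, sub_self, sub_zero, zero_sub, Matrix.mul_zero,
    Matrix.zero_mul, mul_comm]

set_option synthInstance.maxHeartbeats 1000000 in
set_option maxHeartbeats 2000000 in
theorem stmt_3 (n : ℕ) [NeZero n] (hn : 3 ≤ n) (r : Fin n → ℂ) (hr : Function.Injective r) :
    ∀ i j k : Fin n, i ≠ j → i ≠ k → j ≠ k →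
      ⁅Qgen n r i, ⁅Qgen n r j, Qgen n r k⁆⁆ = 0 := by
  intro i j k hij hik hjk
  exact aux_bracket _ _ _ _ _ _ _ (fun h => hij (Fin.castSucc_injective n h))
    (fun h => hik (Fin.castSucc_injective n h)) (fun h => hjk (Fin.castSucc_injective n h))
    (Fin.castSucc_lt_last i).ne (Fin.castSucc_lt_last j).ne (Fin.castSucc_lt_last k).ne
end

section
/- For all i ≠ j and k1, k2 ≥ 1, one has [Q^{2k1−1}_i, Q^{2k2−1}_j] = Q^{2(k1+k2−1)}_{ij} and [Q^{2k1−1}_i, Q^{2k2−1}_i] = 0, where Q^{2k−1}_l = (E_{l,n+1} + E_{n+1,l}) ⊗ λ̄^{k−1}λ̄l and Q^{2k}_{ij} = (E_{i,j} − E_{j,i}) ⊗ λ̄^{k−1}λ̄iλ̄j in so(n,1) ⊗ Q. -/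
open MvPolynomial Matrix

lemma key_smul_mul {α : Type} [CommRing α] {m : Type} [Fintype m] (a b : α)
    (M N : Matrix m m α) : (a • M) * (b • N) = (a * b) • (M * N) := by
  rw [Matrix.smul_mul, Matrix.mul_smul, smul_smul]

lemma aux_mul (n : ℕ) (r : Fin n → ℂ) (i j : Fin n) (hij : i ≠ j) :
    ((single i.castSucc (Fin.last n) (1 : LLQ n r)
        + single (Fin.last n) i.castSucc 1) *
      (single j.castSucc (Fin.last n) 1
        + single (Fin.last n) j.castSucc 1))
      = single i.castSucc j.castSucc 1 := by
  have h2 : Fin.last n ≠ Fin.castSucc j := (Fin.ne_of_lt (Fin.castSucc_lt_last j)).symm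
  have h3 : Fin.castSucc i ≠ Fin.castSucc j := fun h => hij (Fin.castSucc_injective n h)
  have h4 : Fin.castSucc i ≠ Fin.last n := Fin.ne_of_lt (Fin.castSucc_lt_last i)
  simp [mul_add, add_mul, h2, h3, h4]

set_option synthInstance.maxHeartbeats 1000000 in
set_option maxHeartbeats 1000000 in
theorem stmt_6 (n : ℕ) [NeZero n] (hn : 3 ≤ n) (r : Fin n → ℂ) (hr : Function.Injective r) :
    ∀ (i j : Fin n) (k₁ k₂ : ℕ), 1 ≤ k₁ → 1 ≤ k₂ →
      (i ≠ j → ⁅Qodd n r k₁ i, Qodd n r k₂ j⁆ = Qeven n r (k₁ + k₂ - 1) i j) ∧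
      ⁅Qodd n r k₁ i, Qodd n r k₂ i⁆ = 0 := by
  intro i j k₁ k₂ hk₁ hk₂
  have hk : k₁ - 1 + (k₂ - 1) = k₁ + k₂ - 1 - 1 := by omega
  constructor
  · intro hij
    rw [Ring.lie_def]
    unfold Qodd Qeven
    rw [key_smul_mul, key_smul_mul, aux_mul n r i j hij, aux_mul n r j i hij.symm]
    have e1 : (lambar n r ^ (k₁-1) * lamQ n r i) * (lambar n r ^ (k₂-1) * lamQ n r j)
        = lambar n r ^ (k₁ + k₂ - 1 - 1) * lamQ n r i * lamQ n r j := by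
      rw [← hk, pow_add]; ring
    have e2 : (lambar n r ^ (k₂-1) * lamQ n r j) * (lambar n r ^ (k₁-1) * lamQ n r i)
        = lambar n r ^ (k₁ + k₂ - 1 - 1) * lamQ n r i * lamQ n r j := by
      rw [← hk, pow_add]; ring
    rw [e1, e2]
    exact (smul_sub (lambar n r ^ (k₁ + k₂ - 1 - 1) * lamQ n r i * lamQ n r j)
      (single i.castSucc j.castSucc (1 : LLQ n r))
      (single j.castSucc i.castSucc 1)).symm
  · rw [Ring.lie_def]
    unfold Qodd
    rw [key_smul_mul, key_smul_mul, mul_comm]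
    exact sub_self _
end

section
/- The elements Q^{2k−1}_l (l = 1,...,n, k ≥ 1) and Q^{2k}_{ij} (1 ≤ i < j ≤ n, k ≥ 1) are linearly independent over C in so(n,1) ⊗ Q. -/
open MvPolynomial Matrix

noncomputable section AuxLL

def sroot (z : ℂ) : ℂ := Classical.choose (IsAlgClosed.exists_pow_nat_eq z (n := 2) (by norm_num))

lemma sroot_sq (z : ℂ) : sroot z ^ 2 = z :=
  Classical.choose_spec (IsAlgClosed.exists_pow_nat_eq z (n := 2) (by norm_num))

lemma sroot_ne_zero {z : ℂ} (hz : z ≠ 0) : sroot z ≠ 0 := by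
  intro h; apply hz; rw [← sroot_sq z, h]; ring

def evalQ (n : ℕ) (r : Fin n → ℂ) (μ : ℂ) : LLQ n r →ₐ[ℂ] ℂ :=
  Ideal.Quotient.liftₐ (LLIdeal n r) (aeval fun i => sroot (μ - r i)) (by
    intro a ha
    have h2 : LLIdeal n r ≤ RingHom.ker ((aeval fun i => sroot (μ - r i)) :
        MvPolynomial (Fin n) ℂ →ₐ[ℂ] ℂ).toRingHom := by
      rw [LLIdeal, Ideal.span_le]
      rintro p ⟨i, j, rfl⟩
      simp only [SetLike.mem_coe, RingHom.mem_ker, AlgHom.toRingHom_eq_coe, RingHom.coe_coe,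
        map_add, map_sub, map_pow, aeval_X, aeval_C, sroot_sq]
      simp
    exact h2 ha)

@[simp] lemma evalQ_mk (n : ℕ) (r : Fin n → ℂ) (μ : ℂ) (p : MvPolynomial (Fin n) ℂ) :
    evalQ n r μ (Ideal.Quotient.mk _ p) = aeval (fun i => sroot (μ - r i)) p := rfl

@[simp] lemma evalQ_lamQ (n : ℕ) (r : Fin n → ℂ) (μ : ℂ) (i : Fin n) :
    evalQ n r μ (lamQ n r i) = sroot (μ - r i) := by
  simp [lamQ]

@[simp] lemma evalQ_lambar (n : ℕ) [NeZero n] (r : Fin n → ℂ) (μ : ℂ) :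
    evalQ n r μ (lambar n r) = μ := by
  simp [lambar, sroot_sq, AlgHom.commutes]

lemma LLcoeffs_zero (n : ℕ) [NeZero n] (r : Fin n → ℂ) (q : LLQ n r)
    (F : Set ℂ) (hF : F.Finite) (hq : ∀ μ ∉ F, evalQ n r μ q ≠ 0)
    {ι : Type*} (s : Finset ι) (d : ι → ℕ) (c : ι → ℂ)
    (hd : ∀ x ∈ s, ∀ y ∈ s, d x = d y → x = y)
    (h : ∑ x ∈ s, c x • (lambar n r ^ (d x) * q) = 0) :
    ∀ x ∈ s, c x = 0 := by
  set P : Polynomial ℂ := ∑ x ∈ s, Polynomial.C (c x) * Polynomial.X ^ (d x) with hPdef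
  have hroot : ∀ μ ∉ F, P.IsRoot μ := by
    intro μ hμ
    have h2 := congrArg (evalQ n r μ) h
    simp only [map_sum, map_zero, _root_.map_smul, _root_.map_mul, _root_.map_pow, evalQ_lambar,
      smul_eq_mul] at h2
    have h4 : (∑ x ∈ s, c x * μ ^ (d x)) * evalQ n r μ q = 0 := by
      rw [Finset.sum_mul, ← h2]
      exact Finset.sum_congr rfl fun x _ => by ring
    have := (mul_eq_zero.mp h4).resolve_right (hq μ hμ)
    simpa [Polynomial.IsRoot, hPdef, Polynomial.eval_finset_sum] using this
  have hP0 : P = 0 := by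
    apply Polynomial.eq_zero_of_infinite_isRoot
    exact Set.Infinite.mono (fun μ hμ => hroot μ hμ) (hF.infinite_compl)
  intro x hx
  have h3 := congrArg (fun p => Polynomial.coeff p (d x)) hP0
  simp only [hPdef, Polynomial.finset_sum_coeff, Polynomial.coeff_C_mul, Polynomial.coeff_X_pow,
    Polynomial.coeff_zero, mul_ite, mul_one, mul_zero] at h3
  rwa [Finset.sum_eq_single_of_mem x hx (fun y hy hne => by
    rw [if_neg (fun hdeq => hne (hd y hy x hx hdeq.symm))]), if_pos rfl] at h3

section entries
variable (n : ℕ) [NeZero n] (r : Fin n → ℂ)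

lemma Qodd_entry (k : ℕ) (l l' : Fin n) :
    Qodd n r k l' l.castSucc (Fin.last n)
      = if l' = l then lambar n r ^ (k-1) * lamQ n r l else 0 := by
  have h1 : ¬((Fin.last n : Fin (n+1)) = l.castSucc ∧ l'.castSucc = Fin.last n) :=
    fun h => (Fin.castSucc_lt_last l).ne' h.1
  rw [Qodd, Matrix.smul_apply, Matrix.add_apply, Matrix.single_apply_of_ne (h := h1)]
  by_cases h : l' = l
  · subst h
    rw [Matrix.single_apply_same, if_pos rfl]
    simp [smul_eq_mul]
  · rw [Matrix.single_apply_of_ne (h := (fun hc => h (Fin.castSucc_injective n hc.1))),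
      if_neg h]
    simp

lemma Qeven_entry_at_odd (k : ℕ) (i j l : Fin n) :
    Qeven n r k i j l.castSucc (Fin.last n) = 0 := by
  rw [Qeven, Matrix.smul_apply, Matrix.sub_apply,
    Matrix.single_apply_of_ne (h := (fun h => (Fin.castSucc_lt_last j).ne h.2)),
    Matrix.single_apply_of_ne (h := (fun h => (Fin.castSucc_lt_last i).ne h.2))]
  simp

lemma Qodd_entry_at_even (k : ℕ) (l i j : Fin n) :
    Qodd n r k l i.castSucc j.castSucc = 0 := by
  rw [Qodd, Matrix.smul_apply, Matrix.add_apply,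
    Matrix.single_apply_of_ne (h := (fun h => (Fin.castSucc_lt_last j).ne h.2.symm)),
    Matrix.single_apply_of_ne (h := (fun h => (Fin.castSucc_lt_last i).ne h.1.symm))]
  simp

lemma Qeven_entry (k : ℕ) (i j i' j' : Fin n) (hij : i < j) (hij' : i' < j') :
    Qeven n r k i' j' i.castSucc j.castSucc
      = if i' = i ∧ j' = j then lambar n r ^ (k-1) * lamQ n r i * lamQ n r j else 0 := by
  have hcross : ¬(j'.castSucc = i.castSucc ∧ i'.castSucc = j.castSucc) := by
    rintro ⟨h1, h2⟩
    rw [Fin.castSucc_inj] at h1 h2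
    subst h1; subst h2
    exact absurd hij (not_lt.mpr hij'.le)
  rw [Qeven, Matrix.smul_apply, Matrix.sub_apply, Matrix.single_apply_of_ne (h := hcross)]
  by_cases h : i' = i ∧ j' = j
  · obtain ⟨h1, h2⟩ := h; subst h1; subst h2
    rw [Matrix.single_apply_same, if_pos ⟨rfl, rfl⟩]
    simp [smul_eq_mul]
  · rw [Matrix.single_apply_of_ne (h := (fun hc =>
      h ⟨Fin.castSucc_inj.mp hc.1, Fin.castSucc_inj.mp hc.2⟩)), if_neg h]
    simp

end entries

end AuxLL

theorem stmt_7 (n : ℕ) [NeZero n] (hn : 3 ≤ n) (r : Fin n → ℂ) (hr : Function.Injective r) :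
    LinearIndependent ℂ
      (fun x : (Fin n × {k : ℕ // 1 ≤ k}) ⊕
               ({p : Fin n × Fin n // p.1 < p.2} × {k : ℕ // 1 ≤ k}) =>
        match x with
        | Sum.inl (l, k) => Qodd n r k.1 l
        | Sum.inr (p, k) => Qeven n r k.1 p.1.1 p.1.2) := by
  classical
  rw [linearIndependent_iff']
  intro s g hsum x hx
  set v : (Fin n × {k : ℕ // 1 ≤ k}) ⊕
      ({p : Fin n × Fin n // p.1 < p.2} × {k : ℕ // 1 ≤ k}) → LLM n r :=
    (fun x => match x with
      | Sum.inl (l, k) => Qodd n r k.1 l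
      | Sum.inr (p, k) => Qeven n r k.1 p.1.1 p.1.2) with hv
  set d : (Fin n × {k : ℕ // 1 ≤ k}) ⊕
      ({p : Fin n × Fin n // p.1 < p.2} × {k : ℕ // 1 ≤ k}) → ℕ :=
    (fun y => match y with
      | Sum.inl (_, k') => k'.1 - 1
      | Sum.inr (_, k') => k'.1 - 1) with hd
  have hentry : ∀ a b : Fin (n+1), ∑ y ∈ s, g y • (v y a b) = 0 := by
    intro a b
    have h := congrArg (fun M : LLM n r => M a b) hsum
    simpa [Matrix.sum_apply, Matrix.smul_apply] using h
  obtain (⟨l, k⟩ | ⟨⟨⟨i, j⟩, hij⟩, k⟩) := x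
  · -- odd generator
    have h0 := hentry l.castSucc (Fin.last n)
    have hcongr : ∀ y ∈ s, g y • v y l.castSucc (Fin.last n)
        = if ∃ k' : {k : ℕ // 1 ≤ k}, y = Sum.inl (l, k') then
            g y • (lambar n r ^ (d y) * lamQ n r l) else 0 := by
      rintro (⟨l', k'⟩ | ⟨⟨⟨i', j'⟩, hij'⟩, k'⟩) hy
      · rw [show v (Sum.inl (l', k')) = Qodd n r k'.1 l' from rfl, Qodd_entry]
        by_cases h : l' = l
        · subst h
          rw [if_pos rfl, if_pos ⟨k', rfl⟩]
        · rw [if_neg h, smul_zero, if_neg]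
          rintro ⟨k'', hk⟩
          exact h (congrArg (fun z => (Sum.getLeft? z).get! |>.1) hk)
      · rw [show v (Sum.inr (⟨(i', j'), hij'⟩, k'))
            = Qeven n r k'.1 i' j' from rfl, Qeven_entry_at_odd, smul_zero, if_neg]
        rintro ⟨k'', hk⟩
        cases hk
    rw [Finset.sum_congr rfl hcongr, ← Finset.sum_filter] at h0
    refine LLcoeffs_zero n r (lamQ n r l) {r l} (Set.finite_singleton _)
      (fun μ hμ => by
        rw [evalQ_lamQ]
        exact sroot_ne_zero (sub_ne_zero.mpr (by simpa using hμ)))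
      _ d g (fun y hy z hz hdz => ?_) h0 _
      (Finset.mem_filter.mpr ⟨hx, ⟨k, rfl⟩⟩)
    obtain ⟨-, k1, rfl⟩ := Finset.mem_filter.mp hy
    obtain ⟨-, k2, rfl⟩ := Finset.mem_filter.mp hz
    have hdz' : (k1 : ℕ) - 1 = (k2 : ℕ) - 1 := hdz
    have hk : k1 = k2 := Subtype.ext (by have h1 := k1.2; have h2 := k2.2; omega)
    rw [hk]
  · -- even generator
    have h0 := hentry i.castSucc j.castSucc
    have hcongr : ∀ y ∈ s, g y • v y i.castSucc j.castSucc
        = if ∃ k' : {k : ℕ // 1 ≤ k}, y = Sum.inr (⟨(i, j), hij⟩, k') then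
            g y • (lambar n r ^ (d y) * (lamQ n r i * lamQ n r j)) else 0 := by
      rintro (⟨l', k'⟩ | ⟨⟨⟨i', j'⟩, hij'⟩, k'⟩) hy
      · rw [show v (Sum.inl (l', k')) = Qodd n r k'.1 l' from rfl,
          Qodd_entry_at_even, smul_zero, if_neg]
        rintro ⟨k'', hk⟩
        cases hk
      · rw [show v (Sum.inr (⟨(i', j'), hij'⟩, k'))
            = Qeven n r k'.1 i' j' from rfl, Qeven_entry n r k'.1 i j i' j' hij hij']
        by_cases h : i' = i ∧ j' = j
        · obtain ⟨h1, h2⟩ := h; subst h1; subst h2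
          rw [if_pos ⟨rfl, rfl⟩, if_pos ⟨k', rfl⟩, mul_assoc]
        · rw [if_neg h, smul_zero, if_neg]
          rintro ⟨k'', hk⟩
          simp only [Sum.inr.injEq, Prod.mk.injEq, Subtype.mk.injEq] at hk
          obtain ⟨⟨ha, hb⟩, -⟩ := hk
          exact h ⟨ha, hb⟩
    rw [Finset.sum_congr rfl hcongr, ← Finset.sum_filter] at h0
    refine LLcoeffs_zero n r (lamQ n r i * lamQ n r j) {r i, r j}
      ((Set.finite_singleton _).insert _)
      (fun μ hμ => by
        simp only [Set.mem_insert_iff, Set.mem_singleton_iff, not_or] at hμ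
        rw [_root_.map_mul, evalQ_lamQ, evalQ_lamQ]
        exact mul_ne_zero (sroot_ne_zero (sub_ne_zero.mpr hμ.1))
          (sroot_ne_zero (sub_ne_zero.mpr hμ.2)))
      _ d g (fun y hy z hz hdz => ?_) h0 _
      (Finset.mem_filter.mpr ⟨hx, ⟨k, rfl⟩⟩)
    obtain ⟨-, k1, rfl⟩ := Finset.mem_filter.mp hy
    obtain ⟨-, k2, rfl⟩ := Finset.mem_filter.mp hz
    have hdz' : (k1 : ℕ) - 1 = (k2 : ℕ) - 1 := hdz
    have hk : k1 = k2 := Subtype.ext (by have h1 := k1.2; have h2 := k2.2; omega)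
    rw [hk]
end

section
/- The Lie subalgebra L(n) ⊂ so(n,1) ⊗ Q generated by Q_1,...,Q_n is spanned (as a C-vector space) by the elements Q^{2k−1}_l (l = 1,...,n, k ≥ 1) and Q^{2k}_{ij} (1 ≤ i < j ≤ n, k ≥ 1). -/
open MvPolynomial Matrix

attribute [local instance] LieRing.ofAssociativeRing

/-! ### Auxiliary material for the proof -/

noncomputable section LLaux

open Matrix MvPolynomial

set_option linter.unusedSectionVars false
set_option synthInstance.maxHeartbeats 1000000
set_option maxHeartbeats 1000000

variable (n : ℕ) [NeZero n] (r : Fin n → ℂ)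

/-- Bracket of scalar multiples, over a general commutative ring. -/
lemma gen_lie_smul_smul {α : Type*} [CommRing α] {m : Type*} [Fintype m] [DecidableEq m]
    (a b : α) (M N : Matrix m m α) : ⁅a • M, b • N⁆ = (a * b) • ⁅M, N⁆ := by
  rw [Ring.lie_def, Ring.lie_def, smul_mul_assoc, smul_mul_assoc, mul_smul_comm, mul_smul_comm,
    smul_smul, smul_smul, mul_comm b a, smul_sub]

/-- The matrix `E_{l,n+1} + E_{n+1,l}`. -/
def AM (l : Fin n) : LLM n r :=
  single l.castSucc (Fin.last n) 1 + single (Fin.last n) l.castSucc 1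

/-- The matrix `E_{i,j} - E_{j,i}`. -/
def BM (i j : Fin n) : LLM n r :=
  single i.castSucc j.castSucc (1 : LLQ n r) - single j.castSucc i.castSucc 1

lemma Qodd_def (k : ℕ) (l : Fin n) :
    Qodd n r k l = (lambar n r ^ (k-1) * lamQ n r l) • AM n r l := rfl

lemma Qeven_def (k : ℕ) (i j : Fin n) :
    Qeven n r k i j = (lambar n r ^ (k-1) * lamQ n r i * lamQ n r j) • BM n r i j := rfl

lemma Qgen_eq (i : Fin n) : Qodd n r 1 i = Qgen n r i := by
  unfold Qodd Qgen
  norm_num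

lemma lamQ_sq (i : Fin n) : lamQ n r i ^ 2 = lambar n r - algebraMap ℂ _ (r i) := by
  have h : (Ideal.Quotient.mk (LLIdeal n r)) (X i^2 - X (0:Fin n)^2 + C (r i) - C (r 0)) = 0 :=
    Ideal.Quotient.eq_zero_iff_mem.2 (Ideal.subset_span ⟨i, 0, rfl⟩)
  simp only [map_sub, map_add, map_pow] at h
  unfold lambar lamQ
  have e : ∀ x : ℂ, algebraMap ℂ (LLQ n r) x = Ideal.Quotient.mk _ (C x) := fun _ => rfl
  rw [e, e]
  linear_combination h

lemma BM_swap (i j : Fin n) : BM n r j i = - BM n r i j := by simp [BM]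

lemma lieAA (l l' : Fin n) : ⁅AM n r l, AM n r l'⁆ = BM n r l l' := by
  by_cases h : l = l'
  · subst h; rw [lie_self]; simp [BM]
  · have h1 : (l.castSucc : Fin (n+1)) ≠ l'.castSucc := by simpa using h
    have h2 : (l.castSucc : Fin (n+1)) ≠ Fin.last n := (Fin.castSucc_lt_last l).ne
    have h3 : (l'.castSucc : Fin (n+1)) ≠ Fin.last n := (Fin.castSucc_lt_last l').ne
    simp [AM, BM, Ring.lie_def, Matrix.add_mul, Matrix.mul_add, h1, h1.symm, h2, h2.symm,
      h3, h3.symm]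

lemma lieBA_j (i j : Fin n) (h : i ≠ j) : ⁅BM n r i j, AM n r j⁆ = AM n r i := by
  have h1 : (i.castSucc : Fin (n+1)) ≠ j.castSucc := by simpa using h
  have h2 : (i.castSucc : Fin (n+1)) ≠ Fin.last n := (Fin.castSucc_lt_last i).ne
  have h3 : (j.castSucc : Fin (n+1)) ≠ Fin.last n := (Fin.castSucc_lt_last j).ne
  simp [AM, BM, Ring.lie_def, Matrix.add_mul, Matrix.mul_add, Matrix.sub_mul, Matrix.mul_sub,
    h1, h1.symm, h2, h2.symm, h3, h3.symm]

lemma lieBA_ne (i j l : Fin n) (hi : l ≠ i) (hj : l ≠ j) : ⁅BM n r i j, AM n r l⁆ = 0 := by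
  have h1 : (l.castSucc : Fin (n+1)) ≠ i.castSucc := by simpa using hi
  have h2 : (l.castSucc : Fin (n+1)) ≠ j.castSucc := by simpa using hj
  have h3 : (i.castSucc : Fin (n+1)) ≠ Fin.last n := (Fin.castSucc_lt_last i).ne
  have h4 : (j.castSucc : Fin (n+1)) ≠ Fin.last n := (Fin.castSucc_lt_last j).ne
  have h5 : (l.castSucc : Fin (n+1)) ≠ Fin.last n := (Fin.castSucc_lt_last l).ne
  simp [AM, BM, Ring.lie_def, Matrix.add_mul, Matrix.mul_add, Matrix.sub_mul, Matrix.mul_sub,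
    h1, h1.symm, h2, h2.symm, h3, h3.symm, h4, h4.symm, h5, h5.symm]

lemma lieBB (i j l : Fin n) (hij : i ≠ j) (hjl : j ≠ l) (hil : i ≠ l) :
    ⁅BM n r i j, BM n r j l⁆ = BM n r i l := by
  have h1 : (i.castSucc : Fin (n+1)) ≠ j.castSucc := by simpa using hij
  have h2 : (j.castSucc : Fin (n+1)) ≠ l.castSucc := by simpa using hjl
  have h3 : (i.castSucc : Fin (n+1)) ≠ l.castSucc := by simpa using hil
  simp [BM, Ring.lie_def, Matrix.sub_mul, Matrix.mul_sub,
    h1, h1.symm, h2, h2.symm, h3, h3.symm]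

lemma lieBB_disjoint (i j i' j' : Fin n) (h1 : i ≠ i') (h2 : i ≠ j') (h3 : j ≠ i')
    (h4 : j ≠ j') : ⁅BM n r i j, BM n r i' j'⁆ = 0 := by
  have e1 : (i.castSucc : Fin (n+1)) ≠ i'.castSucc := by simpa using h1
  have e2 : (i.castSucc : Fin (n+1)) ≠ j'.castSucc := by simpa using h2
  have e3 : (j.castSucc : Fin (n+1)) ≠ i'.castSucc := by simpa using h3
  have e4 : (j.castSucc : Fin (n+1)) ≠ j'.castSucc := by simpa using h4
  simp [BM, Ring.lie_def, Matrix.sub_mul, Matrix.mul_sub,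
    e1, e1.symm, e2, e2.symm, e3, e3.symm, e4, e4.symm]

lemma lie_smul_smul (a b : LLQ n r) (M N : LLM n r) :
    ⁅a • M, b • N⁆ = (a * b) • ⁅M, N⁆ :=
  gen_lie_smul_smul a b M N

lemma Qeven_swap (k : ℕ) (i j : Fin n) : Qeven n r k j i = - Qeven n r k i j := by
  rw [Qeven_def, Qeven_def, BM_swap]
  match_scalars
  ring

lemma Qeven_same (k : ℕ) (i : Fin n) : Qeven n r k i i = 0 := by
  rw [Qeven_def]; simp [BM]

lemma lie_odd_odd (k k' : ℕ) (hk : 1 ≤ k) (hk' : 1 ≤ k') (l l' : Fin n) :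
    ⁅Qodd n r k l, Qodd n r k' l'⁆ = Qeven n r (k+k'-1) l l' := by
  rw [Qodd_def, Qodd_def,
    lie_smul_smul n r (lambar n r ^ (k-1) * lamQ n r l) (lambar n r ^ (k'-1) * lamQ n r l')
      (AM n r l) (AM n r l'),
    lieAA, Qeven_def, show k + k' - 1 - 1 = (k-1) + (k'-1) from by omega]
  match_scalars
  ring

lemma lie_even_odd (k k' : ℕ) (hk : 1 ≤ k) (hk' : 1 ≤ k') (i j : Fin n) (h : i ≠ j) :
    ⁅Qeven n r k i j, Qodd n r k' j⁆
      = Qodd n r (k+k') i - r j • Qodd n r (k+k'-1) i := by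
  rw [Qeven_def, Qodd_def,
    lie_smul_smul n r (lambar n r ^ (k-1) * lamQ n r i * lamQ n r j)
      (lambar n r ^ (k'-1) * lamQ n r j) (BM n r i j) (AM n r j),
    lieBA_j n r i j h, Qodd_def, Qodd_def,
    show k + k' - 1 - 1 = (k-1) + (k'-1) from by omega,
    show k + k' - 1 = (k-1) + (k'-1) + 1 from by omega]
  have hs := lamQ_sq n r j
  match_scalars
  linear_combination (lambar n r ^ (k-1) * lambar n r ^ (k'-1) * lamQ n r i) * hs

lemma lie_even_odd_ne (k k' : ℕ) (i j l : Fin n) (hi : l ≠ i) (hj : l ≠ j) :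
    ⁅Qeven n r k i j, Qodd n r k' l⁆ = 0 := by
  rw [Qeven_def, Qodd_def,
    lie_smul_smul n r (lambar n r ^ (k-1) * lamQ n r i * lamQ n r j)
      (lambar n r ^ (k'-1) * lamQ n r l) (BM n r i j) (AM n r l),
    lieBA_ne n r i j l hi hj, smul_zero]

lemma lie_even_even (k k' : ℕ) (hk : 1 ≤ k) (hk' : 1 ≤ k') (i j l : Fin n)
    (hij : i ≠ j) (hjl : j ≠ l) (hil : i ≠ l) :
    ⁅Qeven n r k i j, Qeven n r k' j l⁆
      = Qeven n r (k+k') i l - r j • Qeven n r (k+k'-1) i l := by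
  rw [Qeven_def, Qeven_def,
    lie_smul_smul n r (lambar n r ^ (k-1) * lamQ n r i * lamQ n r j)
      (lambar n r ^ (k'-1) * lamQ n r j * lamQ n r l) (BM n r i j) (BM n r j l),
    lieBB n r i j l hij hjl hil, Qeven_def, Qeven_def,
    show k + k' - 1 - 1 = (k-1) + (k'-1) from by omega,
    show k + k' - 1 = (k-1) + (k'-1) + 1 from by omega]
  have hs := lamQ_sq n r j
  match_scalars
  linear_combination (lambar n r ^ (k-1) * lambar n r ^ (k'-1) * lamQ n r i * lamQ n r l) * hs

lemma lie_even_even_disjoint (k k' : ℕ) (i j i' j' : Fin n) (h1 : i ≠ i') (h2 : i ≠ j')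
    (h3 : j ≠ i') (h4 : j ≠ j') : ⁅Qeven n r k i j, Qeven n r k' i' j'⁆ = 0 := by
  rw [Qeven_def, Qeven_def,
    lie_smul_smul n r (lambar n r ^ (k-1) * lamQ n r i * lamQ n r j)
      (lambar n r ^ (k'-1) * lamQ n r i' * lamQ n r j') (BM n r i j) (BM n r i' j'),
    lieBB_disjoint n r i j i' j' h1 h2 h3 h4, smul_zero]

lemma lie_even_even_same (k k' : ℕ) (i j : Fin n) :
    ⁅Qeven n r k i j, Qeven n r k' i j⁆ = 0 := by
  rw [Qeven_def, Qeven_def,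
    lie_smul_smul n r (lambar n r ^ (k-1) * lamQ n r i * lamQ n r j)
      (lambar n r ^ (k'-1) * lamQ n r i * lamQ n r j) (BM n r i j) (BM n r i j),
    lie_self, smul_zero]

/-- The generating set of the span. -/
def Sset : Set (LLM n r) :=
  {y | ∃ (k : ℕ) (l : Fin n), 1 ≤ k ∧ y = Qodd n r k l} ∪
  {y | ∃ (k : ℕ) (i j : Fin n), 1 ≤ k ∧ i < j ∧ y = Qeven n r k i j}

/-- The span of the `Qodd` and `Qeven`. -/
def SS : Submodule ℂ (LLM n r) := Submodule.span ℂ (Sset n r)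

lemma odd_mem_S (k : ℕ) (hk : 1 ≤ k) (l : Fin n) : Qodd n r k l ∈ SS n r :=
  Submodule.subset_span (Or.inl ⟨k, l, hk, rfl⟩)

lemma even_mem_S (k : ℕ) (hk : 1 ≤ k) (i j : Fin n) : Qeven n r k i j ∈ SS n r := by
  rcases lt_trichotomy i j with h | h | h
  · exact Submodule.subset_span (Or.inr ⟨k, i, j, hk, h, rfl⟩)
  · subst h; rw [Qeven_same]; exact zero_mem _
  · rw [show Qeven n r k i j = - Qeven n r k j i from by rw [Qeven_swap]]
    exact neg_mem (Submodule.subset_span (Or.inr ⟨k, j, i, hk, h, rfl⟩))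

lemma lie_even_odd_mem (k k' : ℕ) (hk : 1 ≤ k) (hk' : 1 ≤ k') (i j l : Fin n) (hij : i ≠ j) :
    ⁅Qeven n r k i j, Qodd n r k' l⁆ ∈ SS n r := by
  by_cases hlj : l = j
  · rw [hlj, lie_even_odd n r k k' hk hk' i j hij]
    exact sub_mem (odd_mem_S n r _ (by omega) _)
      (Submodule.smul_mem _ _ (odd_mem_S n r _ (by omega) _))
  · by_cases hli : l = i
    · rw [hli, show Qeven n r k i j = - Qeven n r k j i from by rw [Qeven_swap], neg_lie,
        lie_even_odd n r k k' hk hk' j i (Ne.symm hij)]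
      exact neg_mem (sub_mem (odd_mem_S n r _ (by omega) _)
        (Submodule.smul_mem _ _ (odd_mem_S n r _ (by omega) _)))
    · rw [lie_even_odd_ne n r k k' i j l hli hlj]
      exact zero_mem _

lemma lie_even_even_mem (k k' : ℕ) (hk : 1 ≤ k) (hk' : 1 ≤ k') (i j i' j' : Fin n)
    (hij : i ≠ j) (hij' : i' ≠ j') :
    ⁅Qeven n r k i j, Qeven n r k' i' j'⁆ ∈ SS n r := by
  by_cases h1 : i' = i
  · by_cases h2 : j' = j
    · rw [h1, h2, lie_even_even_same]; exact zero_mem _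
    · rw [h1, show Qeven n r k i j = - Qeven n r k j i from by rw [Qeven_swap], neg_lie,
        lie_even_even n r k k' hk hk' j i j' (Ne.symm hij) (h1 ▸ hij') (fun e => h2 e.symm)]
      exact neg_mem (sub_mem (even_mem_S n r _ (by omega) _ _)
        (Submodule.smul_mem _ _ (even_mem_S n r _ (by omega) _ _)))
  · by_cases h2 : i' = j
    · by_cases h3 : j' = i
      · rw [h2, h3, show Qeven n r k' j i = - Qeven n r k' i j from by rw [Qeven_swap],
          lie_neg, lie_even_even_same, neg_zero]
        exact zero_mem _
      · rw [h2, lie_even_even n r k k' hk hk' i j j' hij (h2 ▸ hij') (fun e => h3 e.symm)]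
        exact sub_mem (even_mem_S n r _ (by omega) _ _)
          (Submodule.smul_mem _ _ (even_mem_S n r _ (by omega) _ _))
    · by_cases h3 : j' = i
      · rw [h3, ← lie_skew,
          lie_even_even n r k' k hk' hk i' i j (h3 ▸ hij') hij h2]
        exact neg_mem (sub_mem (even_mem_S n r _ (by omega) _ _)
          (Submodule.smul_mem _ _ (even_mem_S n r _ (by omega) _ _)))
      · by_cases h4 : j' = j
        · rw [h4, show Qeven n r k' i' j = - Qeven n r k' j i' from by rw [Qeven_swap],
            lie_neg,
            lie_even_even n r k k' hk hk' i j i' hij (fun e => h2 e.symm) (fun e => h1 e.symm)]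
          exact neg_mem (sub_mem (even_mem_S n r _ (by omega) _ _)
            (Submodule.smul_mem _ _ (even_mem_S n r _ (by omega) _ _)))
        · rw [lie_even_even_disjoint n r k k' i j i' j' (fun e => h1 e.symm)
            (fun e => h3 e.symm) (fun e => h2 e.symm) (fun e => h4 e.symm)]
          exact zero_mem _

lemma lie_gen_mem : ∀ x ∈ Sset n r, ∀ y ∈ Sset n r, ⁅x, y⁆ ∈ SS n r := by
  rintro x (⟨k, l, hk, rfl⟩ | ⟨k, i, j, hk, hij, rfl⟩) y
      (⟨k', l', hk', rfl⟩ | ⟨k', i', j', hk', hij', rfl⟩)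
  · rw [lie_odd_odd n r k k' hk hk']
    exact even_mem_S n r _ (by omega) _ _
  · rw [← lie_skew]
    exact neg_mem (lie_even_odd_mem n r k' k hk' hk i' j' l hij'.ne)
  · exact lie_even_odd_mem n r k k' hk hk' i j l' hij.ne
  · exact lie_even_even_mem n r k k' hk hk' i j i' j' hij.ne hij'.ne

lemma S_lie_closed : ∀ x ∈ SS n r, ∀ y ∈ SS n r, ⁅x, y⁆ ∈ SS n r := by
  intro x hx y hy
  induction hy using Submodule.span_induction with
  | mem z hz =>
    induction hx using Submodule.span_induction with
    | mem w hw => exact lie_gen_mem n r w hw z hz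
    | zero => rw [zero_lie]; exact zero_mem _
    | add a b _ _ ha hb => rw [add_lie]; exact add_mem ha hb
    | smul t a _ ha => rw [smul_lie]; exact Submodule.smul_mem _ _ ha
  | zero => rw [lie_zero]; exact zero_mem _
  | add a b _ _ ha hb => rw [lie_add]; exact add_mem ha hb
  | smul t a _ ha => rw [lie_smul]; exact Submodule.smul_mem _ _ ha

/-- `SS` as a Lie subalgebra. -/
def KK : LieSubalgebra ℂ (LLM n r) :=
  { SS n r with
    lie_mem' := fun {x y} hx hy => S_lie_closed n r x hx y hy }

lemma odd_in_L (hn : 3 ≤ n) :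
    ∀ k, 1 ≤ k → ∀ l, Qodd n r k l ∈ LieSubalgebra.lieSpan ℂ (LLM n r) (Set.range (Qgen n r)) := by
  set L := LieSubalgebra.lieSpan ℂ (LLM n r) (Set.range (Qgen n r)) with hL
  intro k hk
  induction k, hk using Nat.le_induction with
  | base =>
    intro l
    rw [Qgen_eq]
    exact LieSubalgebra.subset_lieSpan ⟨l, rfl⟩
  | succ k hk IH =>
    intro l
    obtain ⟨j, hj⟩ : ∃ j : Fin n, j ≠ l := by
      by_cases h : l = ⟨0, by omega⟩
      · exact ⟨⟨1, by omega⟩, by rw [h]; simp [Fin.ext_iff]⟩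
      · exact ⟨⟨0, by omega⟩, fun e => h e.symm⟩
    have hb : Qodd n r 1 j ∈ L := by
      rw [Qgen_eq]; exact LieSubalgebra.subset_lieSpan ⟨j, rfl⟩
    have hev : Qeven n r k l j ∈ L := by
      have := lie_odd_odd n r k 1 hk le_rfl l j
      rw [show k + 1 - 1 = k from rfl] at this
      rw [← this]
      exact L.lie_mem (IH l) hb
    have h2 : Qodd n r (k+1) l = ⁅Qeven n r k l j, Qodd n r 1 j⁆ + r j • Qodd n r k l := by
      rw [lie_even_odd n r k 1 hk le_rfl l j (Ne.symm hj),
        show k + 1 - 1 = k from rfl, sub_add_cancel]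
    rw [h2]
    exact L.add_mem (L.lie_mem hev hb) (L.smul_mem _ (IH l))

end LLaux

theorem stmt_8 (n : ℕ) [NeZero n] (hn : 3 ≤ n) (r : Fin n → ℂ) (hr : Function.Injective r) :
    ∀ x : LLM n r,
      x ∈ LieSubalgebra.lieSpan ℂ (LLM n r) (Set.range (Qgen n r)) ↔
      x ∈ Submodule.span ℂ
        ({y | ∃ (k : ℕ) (l : Fin n), 1 ≤ k ∧ y = Qodd n r k l} ∪
         {y | ∃ (k : ℕ) (i j : Fin n), 1 ≤ k ∧ i < j ∧ y = Qeven n r k i j}) := by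
  intro x
  have hS : (Submodule.span ℂ
        ({y | ∃ (k : ℕ) (l : Fin n), 1 ≤ k ∧ y = Qodd n r k l} ∪
         {y | ∃ (k : ℕ) (i j : Fin n), 1 ≤ k ∧ i < j ∧ y = Qeven n r k i j})) = SS n r := rfl
  rw [hS]
  constructor
  · intro hx
    have hsub : Set.range (Qgen n r) ⊆ (KK n r : Set (LLM n r)) := by
      rintro _ ⟨i, rfl⟩
      rw [← Qgen_eq]
      exact odd_mem_S n r 1 le_rfl i
    exact (LieSubalgebra.lieSpan_le.2 hsub) hx
  · intro hx
    set L := LieSubalgebra.lieSpan ℂ (LLM n r) (Set.range (Qgen n r)) with hL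
    have hsub : Sset n r ⊆ (L : Set (LLM n r)) := by
      rintro y (⟨k, l, hk, rfl⟩ | ⟨k, i, j, hk, hij, rfl⟩)
      · exact odd_in_L n r hn k hk l
      · have := lie_odd_odd n r k 1 hk le_rfl i j
        rw [show k + 1 - 1 = k from rfl] at this
        rw [← this]
        exact L.lie_mem (odd_in_L n r hn k hk i)
          (odd_in_L n r hn 1 le_rfl j)
    exact Submodule.span_le.2 hsub hx
end

section
/- Let g(n) be the quotient of the free Lie algebra on generators p_1,...,p_n by the relations [p_i,[p_i,p_k]] − [p_j,[p_j,p_k]] = (rj − ri)·p_k (for i ≠ k, j ≠ k) and [p_i,[p_j,p_k]] = 0 (for i, j, k pairwise distinct). Then the map p_i ↦ Q_i extends to a surjective Lie algebra homomorphism φ : g(n) → L(n). -/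
open MvPolynomial Matrix

attribute [local instance 100] LieRing.ofAssociativeRing

noncomputable section

def gRel (n : ℕ) (r : Fin n → ℂ) : Set (FreeLieAlgebra ℂ (Fin n)) :=
  {x | ∃ i j k : Fin n, i ≠ k ∧ j ≠ k ∧
        x = ⁅FreeLieAlgebra.of ℂ i, ⁅FreeLieAlgebra.of ℂ i, FreeLieAlgebra.of ℂ k⁆⁆
            - ⁅FreeLieAlgebra.of ℂ j, ⁅FreeLieAlgebra.of ℂ j, FreeLieAlgebra.of ℂ k⁆⁆
            - (r j - r i) • FreeLieAlgebra.of ℂ k} ∪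
  {x | ∃ i j k : Fin n, i ≠ j ∧ i ≠ k ∧ j ≠ k ∧
        x = ⁅FreeLieAlgebra.of ℂ i, ⁅FreeLieAlgebra.of ℂ j, FreeLieAlgebra.of ℂ k⁆⁆}

def gIdeal (n : ℕ) (r : Fin n → ℂ) : LieIdeal ℂ (FreeLieAlgebra ℂ (Fin n)) :=
  LieSubmodule.lieSpan ℂ (FreeLieAlgebra ℂ (Fin n)) (gRel n r)

abbrev gLL (n : ℕ) (r : Fin n → ℂ) : Type := FreeLieAlgebra ℂ (Fin n) ⧸ gIdeal n r

def pgen (n : ℕ) (r : Fin n → ℂ) (i : Fin n) : gLL n r :=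
  LieSubmodule.Quotient.mk (N := gIdeal n r) (FreeLieAlgebra.of ℂ i)


end


set_option synthInstance.maxHeartbeats 1000000
set_option maxHeartbeats 1000000

section Generic
variable {α : Type*} [CommRing α] {m : ℕ}

private lemma EEmul_same (a b d : Fin m) :
    single a b (1:α) * single b d 1 = single a d 1 := by
  rw [single_mul_single_same, one_mul]

private lemma EEmul_ne {b c : Fin m} (a d : Fin m) (h : b ≠ c) :
    single a b (1:α) * single c d 1 = (0 : Matrix (Fin m) (Fin m) α) :=
  single_mul_single_of_ne 1 _ _ _ h 1

private lemma gen_lie_smul_smul_s10 (c d : α) (A B : Matrix (Fin m) (Fin m) α) :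
    ⁅c • A, d • B⁆ = (c * d) • (A * B) - (c * d) • (B * A) := by
  rw [Ring.lie_def, Matrix.smul_mul, Matrix.mul_smul, smul_smul,
    Matrix.smul_mul, Matrix.mul_smul, smul_smul, mul_comm d c]

private lemma gen_bracket2 (li lk : α) (i k N : Fin m)
    (hik : i ≠ k) (hiN : i ≠ N) (hkN : k ≠ N) :
    ⁅li • (single i N (1:α) + single N i 1),
      lk • (single k N (1:α) + single N k 1)⁆
    = (li * lk) • (single i k (1:α) - single k i 1) := by
  rw [gen_lie_smul_smul_s10]
  rw [add_mul, mul_add, mul_add, add_mul, mul_add, mul_add,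
    EEmul_ne _ _ hkN.symm, EEmul_ne _ _ hik, EEmul_ne _ _ hiN, EEmul_same,
    EEmul_ne _ _ hiN.symm, EEmul_ne _ _ hik.symm, EEmul_ne _ _ hkN, EEmul_same]
  module

private lemma gen_bracket3 (li li' lk : α) (i k N : Fin m)
    (hik : i ≠ k) (hiN : i ≠ N) (hkN : k ≠ N) :
    ⁅li • (single i N (1:α) + single N i 1),
      (li' * lk) • (single i k (1:α) - single k i 1)⁆
    = (li * li' * lk) • (single k N (1:α) + single N k 1) := by
  rw [gen_lie_smul_smul_s10]
  simp only [mul_add, add_mul, mul_sub, sub_mul,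
    EEmul_same, EEmul_ne _ _ hiN.symm, EEmul_ne _ _ hkN.symm, EEmul_ne _ _ hik,
    EEmul_ne _ _ hik.symm, EEmul_ne _ _ hkN, EEmul_ne _ _ hiN]
  module

private lemma gen_bracket3' (li lj lk : α) (i j k N : Fin m)
    (hij : i ≠ j) (hik : i ≠ k) (hjk : j ≠ k)
    (hiN : i ≠ N) (hjN : j ≠ N) (hkN : k ≠ N) :
    ⁅li • (single i N (1:α) + single N i 1),
      (lj * lk) • (single j k (1:α) - single k j 1)⁆
    = 0 := by
  rw [gen_lie_smul_smul_s10]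
  simp only [mul_add, add_mul, mul_sub, sub_mul,
    EEmul_ne _ _ hjN.symm, EEmul_ne _ _ hij, EEmul_ne _ _ hkN.symm, EEmul_ne _ _ hik,
    EEmul_ne _ _ hik.symm, EEmul_ne _ _ hkN, EEmul_ne _ _ hij.symm, EEmul_ne _ _ hjN]
  simp

end Generic

noncomputable section
variable (n : ℕ) (r : Fin n → ℂ)

lemma lamQ_sq_sub (i j : Fin n) :
    lamQ n r i ^ 2 - lamQ n r j ^ 2 = algebraMap ℂ (LLQ n r) (r j - r i) := by
  have h : (X i ^ 2 - X j ^ 2 + C (r i) - C (r j) : MvPolynomial (Fin n) ℂ) ∈ LLIdeal n r :=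
    Ideal.subset_span ⟨i, j, rfl⟩
  have := (Ideal.Quotient.eq_zero_iff_mem).2 h
  simp only [map_sub, map_add, map_pow] at this
  rw [show (algebraMap ℂ (LLQ n r)) (r j - r i) = Ideal.Quotient.mk _ (C (r j - r i)) from rfl]
  simp only [map_sub]
  unfold lamQ
  linear_combination this

private lemma csne {i k : Fin n} (h : i ≠ k) : i.castSucc ≠ k.castSucc :=
  fun hh => h (Fin.castSucc_injective n hh)

private lemma csN (i : Fin n) : i.castSucc ≠ Fin.last n := (Fin.castSucc_lt_last i).ne

lemma bracket_Qgen (i k : Fin n) (h : i ≠ k) :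
    ⁅Qgen n r i, Qgen n r k⁆ =
      (lamQ n r i * lamQ n r k) •
        (single i.castSucc k.castSucc (1 : LLQ n r)
          - single k.castSucc i.castSucc 1) :=
  gen_bracket2 _ _ _ _ _ (csne n h) (csN n i) (csN n k)

lemma bracket3_Qgen (i k : Fin n) (h : i ≠ k) :
    ⁅Qgen n r i, ⁅Qgen n r i, Qgen n r k⁆⁆ =
      ((lamQ n r i * lamQ n r i) * lamQ n r k) •
        (single k.castSucc (Fin.last n) (1 : LLQ n r)
          + single (Fin.last n) k.castSucc 1) := by
  rw [bracket_Qgen n r i k h]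
  exact gen_bracket3 _ _ _ _ _ _ (csne n h) (csN n i) (csN n k)

lemma bracket3_Qgen' (i j k : Fin n) (hij : i ≠ j) (hik : i ≠ k) (hjk : j ≠ k) :
    ⁅Qgen n r i, ⁅Qgen n r j, Qgen n r k⁆⁆ = 0 := by
  rw [bracket_Qgen n r j k hjk]
  exact gen_bracket3' _ _ _ _ _ _ _ (csne n hij) (csne n hik) (csne n hjk)
    (csN n i) (csN n j) (csN n k)
end

theorem stmt_10 (n : ℕ) [NeZero n] (hn : 3 ≤ n) (r : Fin n → ℂ) (hr : Function.Injective r) :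
    ∃ φ : gLL n r →ₗ⁅ℂ⁆ (LieSubalgebra.lieSpan ℂ (LLM n r) (Set.range (Qgen n r))),
      (∀ i : Fin n, (φ (pgen n r i) : LLM n r) = Qgen n r i) ∧
      Function.Surjective φ := by
  classical
  set K := LieSubalgebra.lieSpan ℂ (LLM n r) (Set.range (Qgen n r)) with hK
  have hmem : ∀ i, Qgen n r i ∈ K := fun i => LieSubalgebra.subset_lieSpan ⟨i, rfl⟩
  set f : Fin n → K := fun i => ⟨Qgen n r i, hmem i⟩ with hf
  set φ₀ : FreeLieAlgebra ℂ (Fin n) →ₗ⁅ℂ⁆ K := FreeLieAlgebra.lift ℂ f with hφ₀def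
  have hφ₀ : ∀ i, φ₀ (FreeLieAlgebra.of ℂ i) = f i := fun i => FreeLieAlgebra.lift_of_apply f i
  -- the relations vanish
  have hker : gIdeal n r ≤ φ₀.ker := by
    rw [gIdeal]
    apply (LieSubmodule.lieSpan_le).mpr
    rintro x (⟨i, j, k, hik, hjk, rfl⟩ | ⟨i, j, k, hij, hik, hjk, rfl⟩)
    · rw [SetLike.mem_coe, LieHom.mem_ker]
      apply Subtype.ext
      simp only [map_sub, map_smul, LieHom.map_lie, hφ₀, hf,
        AddSubgroupClass.coe_sub, SetLike.val_smul, LieSubalgebra.coe_bracket,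
        ZeroMemClass.coe_zero]
      rw [bracket3_Qgen n r i k hik, bracket3_Qgen n r j k hjk]
      have hQk : (r j - r i) • Qgen n r k
          = (algebraMap ℂ (LLQ n r) (r j - r i) * lamQ n r k) •
              (single k.castSucc (Fin.last n) (1:LLQ n r)
                + single (Fin.last n) k.castSucc 1) := by
        rw [show Qgen n r k = lamQ n r k •
          (single k.castSucc (Fin.last n) (1:LLQ n r)
            + single (Fin.last n) k.castSucc 1) from rfl]
        rw [← smul_assoc, Algebra.smul_def (r j - r i) (lamQ n r k)]
      rw [hQk]
      match_scalars <;>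
        · have h2 := lamQ_sq_sub n r i j
          simp only [map_sub] at h2 ⊢
          linear_combination lamQ n r k * h2
    · rw [SetLike.mem_coe, LieHom.mem_ker]
      apply Subtype.ext
      simp only [LieHom.map_lie, hφ₀, hf]
      rw [ZeroMemClass.coe_zero, LieSubalgebra.coe_bracket, LieSubalgebra.coe_bracket]
      exact bracket3_Qgen' n r i j k hij hik hjk
  have hker' : (gIdeal n r).toSubmodule ≤ LinearMap.ker (φ₀ : FreeLieAlgebra ℂ (Fin n) →ₗ[ℂ] K) :=
    fun x hx => LinearMap.mem_ker.mpr (LieHom.mem_ker.mp (hker hx))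
  let φ : gLL n r →ₗ⁅ℂ⁆ K :=
    { Submodule.liftQ (gIdeal n r).toSubmodule (φ₀ : FreeLieAlgebra ℂ (Fin n) →ₗ[ℂ] K) hker' with
      map_lie' := by
        intro x y
        obtain ⟨a, rfl⟩ := LieSubmodule.Quotient.surjective_mk' (gIdeal n r) x
        obtain ⟨b, rfl⟩ := LieSubmodule.Quotient.surjective_mk' (gIdeal n r) y
        exact φ₀.map_lie a b }
  have hQ : ∀ i : Fin n, (φ (pgen n r i) : LLM n r) = Qgen n r i := by
    intro i
    show ((φ₀ (FreeLieAlgebra.of ℂ i) : K) : LLM n r) = Qgen n r i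
    rw [hφ₀]
  refine ⟨φ, hQ, ?_⟩
  intro x
  have hsub : K ≤ (φ.range.map K.incl) := by
    show LieSubalgebra.lieSpan ℂ (LLM n r) (Set.range (Qgen n r)) ≤ _
    apply LieSubalgebra.lieSpan_le.mpr
    rintro _ ⟨i, rfl⟩
    exact (LieSubalgebra.mem_map _ _ _).mpr ⟨φ (pgen n r i), ⟨pgen n r i, rfl⟩, hQ i⟩
  obtain ⟨y, hy, hyx⟩ := (LieSubalgebra.mem_map _ _ _).mp (hsub x.2)
  obtain ⟨z, rfl⟩ := hy
  exact ⟨z, Subtype.ext hyx⟩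
end
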